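/- Let H be a real n×n matrix with HᵀH = I, let μ > 0 and x ∈ ℝⁿ. Then the vector v = (x − N_μ(x))/μ is a subgradient of f_Haar at N_μ(x); that is, for every y ∈ ℝⁿ, ‖Hy‖₁ ≥ ‖H N_μ(x)‖₁ + ⟨v, y − N_μ(x)⟩. -/

import Mathlib

open Filter Topology Matrix

/-- The soft-thresholding operator with threshold `μ`. -/
noncomputable def softThresh {n : ℕ} (μ : ℝ) (v : EuclideanSpace ℝ (Fin n)) :
    EuclideanSpace ℝ (Fin n) :=
  WithLp.toLp 2 (fun i => if v i < -μ then v i + μ else if μ < v i then v i - μ else 0)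

/-- Multiplication of a Euclidean vector by a matrix. -/
noncomputable def matVec {n : ℕ} (H : Matrix (Fin n) (Fin n) ℝ)
    (x : EuclideanSpace ℝ (Fin n)) : EuclideanSpace ℝ (Fin n) :=
  (WithLp.equiv 2 (Fin n → ℝ)).symm (H.mulVec ((WithLp.equiv 2 (Fin n → ℝ)) x))

/-- The transformed soft-thresholding operator `N_μ(x) = Hᵀ ST_μ (H x)`. -/
noncomputable def haarProx {n : ℕ} (H : Matrix (Fin n) (Fin n) ℝ) (μ : ℝ)
    (x : EuclideanSpace ℝ (Fin n)) : EuclideanSpace ℝ (Fin n) :=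
  matVec Hᵀ (softThresh μ (matVec H x))

/-- The 1-norm of a vector. -/
noncomputable def norm1 {n : ℕ} (u : EuclideanSpace ℝ (Fin n)) : ℝ :=
  ∑ i, |u i|

lemma key_ineq (μ u w : ℝ) (hμ : 0 < μ) :
    |if u < -μ then u + μ else if μ < u then u - μ else 0| +
      μ⁻¹ * ((u - (if u < -μ then u + μ else if μ < u then u - μ else 0)) *
        (w - (if u < -μ then u + μ else if μ < u then u - μ else 0))) ≤ |w| := by
  have hμ' : μ⁻¹ * μ = 1 := inv_mul_cancel₀ hμ.ne'
  rcases lt_or_ge u (-μ) with h1 | h1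
  · rw [if_pos h1, abs_of_nonpos (by linarith), show u - (u + μ) = -μ from by ring]
    have h3 : μ⁻¹ * (-μ * (w - (u + μ))) = -(w - (u + μ)) := by
      field_simp; try ring
    rw [h3]; linarith [neg_abs_le w]
  · rw [if_neg (not_lt.2 h1)]
    rcases lt_or_ge μ u with h2 | h2
    · rw [if_pos h2, abs_of_nonneg (by linarith), show u - (u - μ) = μ from by ring]
      have h3 : μ⁻¹ * (μ * (w - (u - μ))) = w - (u - μ) := by field_simp; try ring
      rw [h3]; linarith [le_abs_self w]
    · rw [if_neg (not_lt.2 h2)]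
      simp only [abs_zero, sub_zero, zero_add]
      calc μ⁻¹ * (u * w) ≤ |μ⁻¹ * (u * w)| := le_abs_self _
        _ = μ⁻¹ * |u| * |w| := by
            rw [abs_mul, abs_mul, abs_of_pos (inv_pos.2 hμ)]; ring
        _ ≤ μ⁻¹ * μ * |w| := by
            have h4 : |u| ≤ μ := abs_le.2 ⟨h1, h2⟩
            gcongr
        _ = |w| := by rw [hμ']; ring

/-- `(x − N_μ(x))/μ` is a subgradient of `f_Haar = ‖H·‖₁` at `N_μ(x)`. -/
theorem haar_soft_threshold_subgradient {n : ℕ}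
    (H : Matrix (Fin n) (Fin n) ℝ) (hH : Hᵀ * H = 1)
    (μ : ℝ) (hμ : 0 < μ) (x : EuclideanSpace ℝ (Fin n)) :
    ∀ y : EuclideanSpace ℝ (Fin n),
      norm1 (matVec H y)
        ≥ norm1 (matVec H (haarProx H μ x))
          + inner ℝ (μ⁻¹ • (x - haarProx H μ x)) (y - haarProx H μ x) := by
  intro y
  have hHH : H * Hᵀ = 1 := mul_eq_one_comm.mp hH
  set u : Fin n → ℝ := H.mulVec x with hu
  set s : Fin n → ℝ :=
    fun i => if u i < -μ then u i + μ else if μ < u i then u i - μ else 0 with hs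
  set w : Fin n → ℝ := H.mulVec y with hw
  have hNs : ∀ i, matVec H (haarProx H μ x) i = s i := by
    intro i
    show (H.mulVec (Hᵀ.mulVec s)) i = s i
    rw [Matrix.mulVec_mulVec, hHH, Matrix.one_mulVec]
  have hxN : ∀ i, (x - haarProx H μ x) i = Hᵀ.mulVec (u - s) i := by
    intro i
    have hx' : Hᵀ.mulVec u i = x i := by
      show (Hᵀ.mulVec (H.mulVec x)) i = x i
      rw [Matrix.mulVec_mulVec, hH, Matrix.one_mulVec]
    show x i - (Hᵀ.mulVec s) i = _
    rw [Matrix.mulVec_sub, Pi.sub_apply, hx']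
  have hyN : ∀ i, (y - haarProx H μ x) i = Hᵀ.mulVec (w - s) i := by
    intro i
    have hy' : Hᵀ.mulVec w i = y i := by
      show (Hᵀ.mulVec (H.mulVec y)) i = y i
      rw [Matrix.mulVec_mulVec, hH, Matrix.one_mulVec]
    show y i - (Hᵀ.mulVec s) i = _
    rw [Matrix.mulVec_sub, Pi.sub_apply, hy']
  have horth : ∀ a b : Fin n → ℝ, (Hᵀ.mulVec a) ⬝ᵥ (Hᵀ.mulVec b) = a ⬝ᵥ b := by
    intro a b
    rw [Matrix.mulVec_transpose, ← dotProduct_mulVec, Matrix.mulVec_mulVec,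
      hHH, Matrix.one_mulVec]
  have hinner : (inner ℝ (μ⁻¹ • (x - haarProx H μ x)) (y - haarProx H μ x) : ℝ)
      = μ⁻¹ * ∑ i, (u i - s i) * (w i - s i) := by
    rw [real_inner_smul_left]
    congr 1
    have h1 : (inner ℝ (x - haarProx H μ x) (y - haarProx H μ x) : ℝ)
        = (Hᵀ.mulVec (u - s)) ⬝ᵥ (Hᵀ.mulVec (w - s)) := by
      simp only [PiLp.inner_apply, RCLike.inner_apply, conj_trivial, dotProduct]
      exact Finset.sum_congr rfl fun i _ => by rw [hxN i, hyN i, mul_comm]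
    rw [h1, horth, dotProduct]
    simp [Pi.sub_apply]
  have hN1 : norm1 (matVec H (haarProx H μ x)) = ∑ i, |s i| :=
    Finset.sum_congr rfl fun i _ => by rw [hNs i]
  have hy1 : norm1 (matVec H y) = ∑ i, |w i| := rfl
  rw [ge_iff_le, hinner, hN1, hy1, Finset.mul_sum, ← Finset.sum_add_distrib]
  exact Finset.sum_le_sum fun i _ => key_ineq μ (u i) (w i) hμ
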